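/- Let ν be a compactly supported probability measure on ℝ^d absolutely continuous with respect to Lebesgue measure, and let M > 0. Then there exist b, γ > 0 such that for every unit vector w and every e ∈ ℝ^d with ‖e‖ ≤ M, the ν-measure of the set { u ∈ ℝ^d : inf_{v ∈ S(w,γ)} |v^T (u + e)| > b } is at least 1/2, where S(w,γ) = { v : ‖v‖ = 1, ‖v - w‖ ≤ γ }. -/

import Mathlib

open MeasureTheory
open Filter Topology Set Metric

lemma aux_hyperplane {d : ℕ} (w : EuclideanSpace ℝ (Fin d)) (hw : ‖w‖ = 1) (c : ℝ) :
    volume {u : EuclideanSpace ℝ (Fin d) | (inner ℝ w u : ℝ) + c = 0} = 0 := by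
  set f : EuclideanSpace ℝ (Fin d) →L[ℝ] ℝ := innerSL ℝ w with hf
  have hww : (inner ℝ w w : ℝ) = 1 := by
    rw [real_inner_self_eq_norm_sq, hw]; norm_num
  have hker : volume ((LinearMap.ker (f : EuclideanSpace ℝ (Fin d) →ₗ[ℝ] ℝ) : Submodule ℝ _) :
      Set (EuclideanSpace ℝ (Fin d))) = 0 := by
    apply Measure.addHaar_submodule
    intro htop
    have hwk : w ∈ LinearMap.ker (f : EuclideanSpace ℝ (Fin d) →ₗ[ℝ] ℝ) := by
      rw [htop]; trivial
    have : (inner ℝ w w : ℝ) = 0 := hwk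
    rw [hww] at this; norm_num at this
  have hset : {u : EuclideanSpace ℝ (Fin d) | (inner ℝ w u : ℝ) + c = 0}
      = (· + (c • w)) ⁻¹' ((LinearMap.ker (f : EuclideanSpace ℝ (Fin d) →ₗ[ℝ] ℝ) :
          Submodule ℝ _) : Set (EuclideanSpace ℝ (Fin d))) := by
    ext u
    simp only [Set.mem_setOf_eq, Set.mem_preimage, SetLike.mem_coe, LinearMap.mem_ker]
    have : (f : EuclideanSpace ℝ (Fin d) →ₗ[ℝ] ℝ) (u + c • w) = (inner ℝ w u : ℝ) + c := by
      show (inner ℝ w (u + c • w) : ℝ) = (inner ℝ w u : ℝ) + c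
      rw [inner_add_right, real_inner_smul_right, hww, mul_one]
    rw [this]
  rw [hset, measure_preimage_add_right]
  exact hker

lemma aux_slab_meas {d : ℕ} (w : EuclideanSpace ℝ (Fin d)) (c b : ℝ) :
    MeasurableSet {u : EuclideanSpace ℝ (Fin d) | |(inner ℝ w u : ℝ) + c| ≤ b} := by
  have hcont : Continuous fun u : EuclideanSpace ℝ (Fin d) => |(inner ℝ w u : ℝ) + c| :=
    ((continuous_const.inner continuous_id).add continuous_const).abs
  exact (isClosed_le hcont continuous_const).measurableSet

lemma aux_core {d : ℕ} (ν : Measure (EuclideanSpace ℝ (Fin d))) [IsProbabilityMeasure ν]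
    (hac : ν ≪ volume) (K : Set (EuclideanSpace ℝ (Fin d)))
    (hK : IsCompact K) (hKc : ν Kᶜ = 0) (M R : ℝ) (hR : 0 ≤ R)
    (hKR : K ⊆ closedBall 0 R) :
    ∃ b > (0:ℝ), ∀ w : EuclideanSpace ℝ (Fin d), ‖w‖ = 1 → ∀ c : ℝ, |c| ≤ M →
      ν {u | |(inner ℝ w u : ℝ) + c| ≤ b} ≤ 1/2 := by
  by_contra hcon
  push_neg at hcon
  -- extract a bad sequence
  have hbad : ∀ n : ℕ, ∃ p : EuclideanSpace ℝ (Fin d) × ℝ,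
      p ∈ (sphere (0 : EuclideanSpace ℝ (Fin d)) 1) ×ˢ Icc (-M) M ∧
      1/2 < ν {u | |(inner ℝ p.1 u : ℝ) + p.2| ≤ 1/(n+1)} := by
    intro n
    obtain ⟨w, hw, c, hc, hν⟩ := hcon (1/(n+1)) (by positivity)
    exact ⟨(w, c), ⟨mem_sphere_zero_iff_norm.2 hw, abs_le.1 hc⟩, hν⟩
  choose p hmem hν using hbad
  have hcpt : IsCompact ((sphere (0 : EuclideanSpace ℝ (Fin d)) 1) ×ˢ Icc (-M) M) :=
    (isCompact_sphere 0 1).prod isCompact_Icc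
  obtain ⟨⟨w, c⟩, hwc, φ, hφ, hlim⟩ := hcpt.tendsto_subseq hmem
  have hw : ‖w‖ = 1 := mem_sphere_zero_iff_norm.1 hwc.1
  have hlim1 : Tendsto (fun n => (p (φ n)).1) atTop (𝓝 w) :=
    ((continuous_fst.tendsto _).comp hlim)
  have hlim2 : Tendsto (fun n => (p (φ n)).2) atTop (𝓝 c) :=
    ((continuous_snd.tendsto _).comp hlim)
  -- every ε-slab around the limit has measure ≥ 1/2
  have key : ∀ ε : ℝ, 0 < ε → (1/2 : ENNReal) ≤ ν {u | |(inner ℝ w u : ℝ) + c| ≤ ε} := by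
    intro ε hε
    obtain ⟨N₁, hN₁⟩ := (Metric.tendsto_atTop.1 hlim1) (ε/(3*(R+1))) (by positivity)
    obtain ⟨N₂, hN₂⟩ := (Metric.tendsto_atTop.1 hlim2) (ε/3) (by positivity)
    obtain ⟨N₃, hN₃⟩ := exists_nat_one_div_lt (show (0:ℝ) < ε/3 by positivity)
    set n := max N₁ (max N₂ N₃) with hn
    have h1 : dist (p (φ n)).1 w < ε/(3*(R+1)) := hN₁ n (le_max_left _ _)
    have h2 : dist (p (φ n)).2 c < ε/3 := hN₂ n ((le_max_left N₂ N₃).trans (le_max_right _ _))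
    have h3 : (1:ℝ)/(φ n + 1) < ε/3 := by
      have hφn : (N₃ : ℝ) + 1 ≤ (φ n : ℝ) + 1 := by
        have : N₃ ≤ φ n :=
          le_trans ((le_max_right N₂ N₃).trans (le_max_right _ _)) (hφ.le_apply)
        exact_mod_cast Nat.add_le_add_right this 1
      calc (1:ℝ)/(φ n + 1) ≤ 1/(N₃ + 1) := by
            apply one_div_le_one_div_of_le (by positivity) hφn
        _ < ε/3 := hN₃
    -- inclusion of the bad slab ∩ K into the ε-slab
    have hincl : {u | |(inner ℝ (p (φ n)).1 u : ℝ) + (p (φ n)).2| ≤ 1/(φ n + 1)} ∩ K ⊆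
        {u | |(inner ℝ w u : ℝ) + c| ≤ ε} := by
      rintro u ⟨hu, huK⟩
      have hunorm : ‖u‖ ≤ R := by simpa using hKR huK
      have step : |(inner ℝ w u : ℝ) + c| ≤
          |(inner ℝ (p (φ n)).1 u : ℝ) + (p (φ n)).2|
            + ‖w - (p (φ n)).1‖ * ‖u‖ + |c - (p (φ n)).2| := by
        have : (inner ℝ w u : ℝ) + c = ((inner ℝ (p (φ n)).1 u : ℝ) + (p (φ n)).2)
            + (inner ℝ (w - (p (φ n)).1) u : ℝ) + (c - (p (φ n)).2) := by
          rw [inner_sub_left]; ring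
        rw [this]
        calc |_| ≤ |((inner ℝ (p (φ n)).1 u : ℝ) + (p (φ n)).2)
              + (inner ℝ (w - (p (φ n)).1) u : ℝ)| + |c - (p (φ n)).2| := abs_add_le _ _
          _ ≤ |(inner ℝ (p (φ n)).1 u : ℝ) + (p (φ n)).2|
              + |(inner ℝ (w - (p (φ n)).1) u : ℝ)| + |c - (p (φ n)).2| := by
                gcongr; exact abs_add_le _ _
          _ ≤ _ := by gcongr; exact abs_real_inner_le_norm _ _
      have b1 : |(inner ℝ (p (φ n)).1 u : ℝ) + (p (φ n)).2| ≤ 1/(φ n + 1) := hu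
      have b2 : ‖w - (p (φ n)).1‖ * ‖u‖ ≤ ε/3 := by
        have hd : ‖w - (p (φ n)).1‖ < ε/(3*(R+1)) := by
          rw [← dist_eq_norm, dist_comm]; exact h1
        calc ‖w - (p (φ n)).1‖ * ‖u‖ ≤ (ε/(3*(R+1))) * R := by
              apply mul_le_mul hd.le hunorm (norm_nonneg _) (by positivity)
          _ ≤ ε/3 := by
              rw [div_mul_eq_mul_div, div_le_div_iff₀ (by positivity) (by norm_num)]
              nlinarith
      have b3 : |c - (p (φ n)).2| ≤ ε/3 := by
        rw [abs_sub_comm, ← Real.dist_eq]; exact h2.le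
      have := step.trans (by linarith [h3] : |(inner ℝ (p (φ n)).1 u : ℝ) + (p (φ n)).2|
            + ‖w - (p (φ n)).1‖ * ‖u‖ + |c - (p (φ n)).2| ≤ ε)
      exact this
    -- measure chase
    have hle : ν {u | |(inner ℝ (p (φ n)).1 u : ℝ) + (p (φ n)).2| ≤ 1/(φ n + 1)} ≤
        ν {u | |(inner ℝ w u : ℝ) + c| ≤ ε} := by
      calc ν {u | |(inner ℝ (p (φ n)).1 u : ℝ) + (p (φ n)).2| ≤ 1/(φ n + 1)}
          ≤ ν ({u | |(inner ℝ (p (φ n)).1 u : ℝ) + (p (φ n)).2| ≤ 1/(φ n + 1)} ∩ K)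
            + ν ({u | |(inner ℝ (p (φ n)).1 u : ℝ) + (p (φ n)).2| ≤ 1/(φ n + 1)} \ K) :=
              measure_le_inter_add_diff _ _ _
        _ ≤ ν {u | |(inner ℝ w u : ℝ) + c| ≤ ε} + ν Kᶜ := by
              exact add_le_add (measure_mono hincl) (measure_mono (diff_subset_compl _ _))
        _ = ν {u | |(inner ℝ w u : ℝ) + c| ≤ ε} := by rw [hKc, add_zero]
    exact le_trans (hν (φ n)).le hle
  -- pass to the limit ε → 0
  set A : ℕ → Set (EuclideanSpace ℝ (Fin d)) :=
    fun n => {u | |(inner ℝ w u : ℝ) + c| ≤ 1/(n+1)} with hA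
  have hAanti : Antitone A := by
    intro m k hmk u hu
    simp only [hA, Set.mem_setOf_eq] at hu ⊢
    refine le_trans hu ?_
    apply one_div_le_one_div_of_le (by positivity)
    exact_mod_cast Nat.add_le_add_right hmk 1
  have hAint : ⋂ n, A n = {u | (inner ℝ w u : ℝ) + c = 0} := by
    ext u
    simp only [Set.mem_iInter, hA, Set.mem_setOf_eq]
    constructor
    · intro h
      have h0 : |(inner ℝ w u : ℝ) + c| ≤ 0 :=
        ge_of_tendsto' tendsto_one_div_add_atTop_nhds_zero_nat (fun n => h n)
      have := abs_nonneg ((inner ℝ w u : ℝ) + c)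
      have : |(inner ℝ w u : ℝ) + c| = 0 := le_antisymm h0 this
      exact abs_eq_zero.1 this
    · intro h n; rw [h, abs_zero]; positivity
  have htend : Tendsto (ν ∘ A) atTop (𝓝 (ν (⋂ n, A n))) := by
    apply tendsto_measure_iInter_atTop
    · intro n; exact (aux_slab_meas w c _).nullMeasurableSet
    · exact hAanti
    · exact ⟨0, measure_ne_top ν _⟩
  have hge : (1/2 : ENNReal) ≤ ν (⋂ n, A n) :=
    ge_of_tendsto' htend (fun n => key _ (by positivity))
  rw [hAint] at hge
  have hzero : ν {u | (inner ℝ w u : ℝ) + c = 0} = 0 := hac (aux_hyperplane w hw c)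
  rw [hzero] at hge
  simp at hge


/-- Uniform anti-concentration over spherical caps: if `ν` is a compactly supported
probability measure on `ℝ^d`, absolutely continuous w.r.t. Lebesgue measure, and
`M > 0`, then there are `b, γ > 0` such that for every unit vector `w` and every
shift `e` with `‖e‖ ≤ M`, the `ν`-measure of
`{u : inf_{v ∈ S(w,γ)} |⟪v, u + e⟫| > b}` is at least `1/2`. -/
theorem anticoncentration_spherical_cap {d : ℕ}
    (ν : Measure (EuclideanSpace ℝ (Fin d))) [IsProbabilityMeasure ν]
    (hac : ν ≪ volume)
    (hcompact : ∃ K : Set (EuclideanSpace ℝ (Fin d)), IsCompact K ∧ ν Kᶜ = 0)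
    (M : ℝ) (hM : 0 < M) :
    ∃ b > (0:ℝ), ∃ γ > (0:ℝ),
      ∀ w : EuclideanSpace ℝ (Fin d), ‖w‖ = 1 →
      ∀ e : EuclideanSpace ℝ (Fin d), ‖e‖ ≤ M →
        (1/2 : ENNReal) ≤
          ν {u | b < ⨅ v : {v : EuclideanSpace ℝ (Fin d) // ‖v‖ = 1 ∧ ‖v - w‖ ≤ γ},
                |(inner ℝ v.1 (u + e) : ℝ)|} := by
  obtain ⟨K, hK, hKc⟩ := hcompact
  obtain ⟨r, hKr⟩ := hK.isBounded.subset_closedBall 0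
  set R := max r 0 with hRdef
  have hR0 : (0:ℝ) ≤ R := le_max_right _ _
  have hKR : K ⊆ closedBall 0 R := hKr.trans (closedBall_subset_closedBall (le_max_left _ _))
  obtain ⟨b', hb', hslab⟩ := aux_core ν hac K hK hKc M R hR0 hKR
  set γ := b'/(2*(R+M+1)) with hγ
  have hγpos : 0 < γ := by positivity
  refine ⟨b'/2, by positivity, γ, hγpos, ?_⟩
  intro w hw e he
  set c : ℝ := inner ℝ w e with hc
  have hcM : |c| ≤ M := by
    calc |c| ≤ ‖w‖ * ‖e‖ := abs_real_inner_le_norm _ _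
      _ ≤ M := by rw [hw, one_mul]; exact he
  have hγRM : γ * (R + M) ≤ b'/2 := by
    rw [hγ, div_mul_eq_mul_div, div_le_div_iff₀ (by positivity) (by norm_num)]
    nlinarith
  have hincl : {u | |(inner ℝ w u : ℝ) + c| ≤ b'}ᶜ ∩ K ⊆
      {u | b'/2 < ⨅ v : {v : EuclideanSpace ℝ (Fin d) // ‖v‖ = 1 ∧ ‖v - w‖ ≤ γ},
          |(inner ℝ v.1 (u + e) : ℝ)|} := by
    rintro u ⟨hu, huK⟩
    simp only [Set.mem_compl_iff, Set.mem_setOf_eq, not_le] at hu ⊢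
    have hwx : (inner ℝ w (u + e) : ℝ) = inner ℝ w u + c := by rw [inner_add_right, hc]
    have hxn : ‖u + e‖ ≤ R + M := by
      calc ‖u + e‖ ≤ ‖u‖ + ‖e‖ := norm_add_le _ _
        _ ≤ R + M := add_le_add (by simpa using hKR huK) he
    have hkey : ∀ v : {v : EuclideanSpace ℝ (Fin d) // ‖v‖ = 1 ∧ ‖v - w‖ ≤ γ},
        |(inner ℝ w (u+e) : ℝ)| - γ * (R + M) ≤ |(inner ℝ v.1 (u + e) : ℝ)| := by
      rintro ⟨v, hv1, hv2⟩
      have h1 : |(inner ℝ w (u+e) : ℝ)| ≤ |(inner ℝ v (u+e) : ℝ)| + ‖w - v‖ * ‖u+e‖ := by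
        have hsplit : (inner ℝ w (u+e) : ℝ) = inner ℝ v (u+e) + inner ℝ (w - v) (u+e) := by
          rw [inner_sub_left]; ring
        rw [hsplit]
        refine (abs_add_le _ _).trans ?_
        gcongr
        exact abs_real_inner_le_norm _ _
      have h2 : ‖w - v‖ * ‖u+e‖ ≤ γ * (R + M) := by
        apply mul_le_mul _ hxn (norm_nonneg _) hγpos.le
        rw [norm_sub_rev]; exact hv2
      linarith
    have hne : Nonempty {v : EuclideanSpace ℝ (Fin d) // ‖v‖ = 1 ∧ ‖v - w‖ ≤ γ} :=
      ⟨⟨w, hw, by simp [hγpos.le]⟩⟩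
    have hlt : b'/2 < |(inner ℝ w (u+e) : ℝ)| - γ*(R+M) := by
      rw [hwx]; linarith
    exact lt_of_lt_of_le hlt (le_ciInf hkey)
  have hmeas := aux_slab_meas w c b'
  calc (1/2 : ENNReal) = 1 - 1/2 := by rw [one_div, ENNReal.one_sub_inv_two]
    _ ≤ 1 - ν {u | |(inner ℝ w u : ℝ) + c| ≤ b'} := tsub_le_tsub_left (hslab w hw c hcM) 1
    _ = ν {u | |(inner ℝ w u : ℝ) + c| ≤ b'}ᶜ := (prob_compl_eq_one_sub hmeas).symm
    _ ≤ ν ({u | |(inner ℝ w u : ℝ) + c| ≤ b'}ᶜ ∩ K)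
        + ν ({u | |(inner ℝ w u : ℝ) + c| ≤ b'}ᶜ \ K) := measure_le_inter_add_diff _ _ _
    _ ≤ ν {u | b'/2 < ⨅ v : {v : EuclideanSpace ℝ (Fin d) // ‖v‖ = 1 ∧ ‖v - w‖ ≤ γ},
          |(inner ℝ v.1 (u + e) : ℝ)|} + ν Kᶜ :=
        add_le_add (measure_mono hincl) (measure_mono (diff_subset_compl _ _))
    _ = _ := by rw [hKc, add_zero]
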